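/- arXiv:1604.00290 — 2 statements merged into one kernel-verified Lean document; each statement's English description precedes it below -/
import Mathlib

section
/- Let k ≥ 1 be a real number and suppose that every row of the matrix A has ℓ² norm at most k. Then every coordinate of every fundamental solution to the system Σ is at most n^{3/2}·k^{n−1}. (Theorem 8.1(2).) -/
open Finset

lemma hadamard {d : ℕ} (M : Matrix (Fin d) (Fin d) ℝ) :
    |M.det| ≤ ∏ i : Fin d, Real.sqrt (∑ j : Fin d, M i j ^ 2) := by
  haveI : Fact (Module.finrank ℝ (EuclideanSpace ℝ (Fin d)) = d) :=
    ⟨finrank_euclideanSpace_fin⟩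
  set b : OrthonormalBasis (Fin d) ℝ (EuclideanSpace ℝ (Fin d)) :=
    EuclideanSpace.basisFun (Fin d) ℝ with hb
  set o := b.toBasis.orientation
  set v : Fin d → EuclideanSpace ℝ (Fin d) := fun i => (WithLp.equiv 2 _).symm (M i) with hv
  have h1 : |o.volumeForm v| ≤ ∏ i : Fin d, ‖v i‖ := o.abs_volumeForm_apply_le _
  have h2 : |o.volumeForm v| = |b.toBasis.det v| := o.volumeForm_robust' b _
  have h3 : b.toBasis.det v = M.det := by
    rw [Module.Basis.det_apply]
    rw [show b.toBasis.toMatrix v = M.transpose by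
      ext i j
      rw [Module.Basis.toMatrix_apply]
      simp [hb, hv, EuclideanSpace.basisFun_repr, Matrix.transpose_apply]]
    exact Matrix.det_transpose M
  calc |M.det| = |o.volumeForm v| := by rw [h2, h3]
    _ ≤ ∏ i, ‖v i‖ := h1
    _ = ∏ i : Fin d, Real.sqrt (∑ j : Fin d, M i j ^ 2) := by
        refine Finset.prod_congr rfl fun i _ => ?_
        rw [EuclideanSpace.norm_eq]
        congr 1
        refine Finset.sum_congr rfl fun j _ => ?_
        simp [hv, sq_abs, Real.norm_eq_abs]

variable {d : ℕ}

noncomputable def cof (r : Fin d → (Fin (d+1) → ℝ)) : Fin (d+1) → ℝ :=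
  fun j => (-1 : ℝ) ^ (j : ℕ) *
    (Matrix.of (fun i j' => r i (j.succAbove j')) : Matrix (Fin d) (Fin d) ℝ).det

lemma det_cons_eq (r : Fin d → (Fin (d+1) → ℝ)) (y : Fin (d+1) → ℝ) :
    (Matrix.of (Fin.cons y r : ∀ _ : Fin (d+1), Fin (d+1) → ℝ)).det
      = ∑ j, y j * cof r j := by
  rw [Matrix.det_succ_row_zero]
  refine Finset.sum_congr rfl fun j _ => ?_
  simp only [cof, Matrix.of_apply, Fin.cons_zero]
  rw [show (Matrix.of (Fin.cons y r : ∀ _ : Fin (d+1), Fin (d+1) → ℝ)).submatrix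
        Fin.succ j.succAbove = Matrix.of (fun i j' => r i (j.succAbove j')) by
    ext i j'; simp [Matrix.submatrix_apply]]
  ring

lemma cof_orth (r : Fin d → (Fin (d+1) → ℝ)) (i : Fin d) :
    ∑ j, r i j * cof r j = 0 := by
  rw [← det_cons_eq]
  exact Matrix.det_zero_of_row_eq (i := 0) (j := i.succ) (Fin.succ_ne_zero i).symm
    (by ext j'; simp)

lemma cof_ne_zero (r : Fin d → (Fin (d+1) → ℝ)) (hr : LinearIndependent ℝ r) :
    cof r ≠ 0 := by
  have hdim : Submodule.span ℝ (Set.range r) ≠ ⊤ := by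
    intro h
    have h1 : Module.finrank ℝ (Submodule.span ℝ (Set.range r)) = d :=
      by simpa using finrank_span_eq_card hr
    rw [h, finrank_top, Module.finrank_fintype_fun_eq_card] at h1
    simp at h1
  obtain ⟨y, hy⟩ : ∃ y, y ∉ Submodule.span ℝ (Set.range r) := by
    by_contra h
    push_neg at h
    exact hdim (Submodule.eq_top_iff'.2 h)
  have hind : LinearIndependent ℝ (Fin.cons y r : ∀ _ : Fin (d+1), Fin (d+1) → ℝ) :=
    linearIndependent_fin_cons.2 ⟨hr, hy⟩
  have hdet : (Matrix.of (Fin.cons y r : ∀ _ : Fin (d+1), Fin (d+1) → ℝ)).det ≠ 0 := by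
    have := Matrix.linearIndependent_rows_iff_isUnit
      (A := (Matrix.of (Fin.cons y r : ∀ _ : Fin (d+1), Fin (d+1) → ℝ))) (K := ℝ)
    have hu : IsUnit (Matrix.of (Fin.cons y r : ∀ _ : Fin (d+1), Fin (d+1) → ℝ)) :=
      this.1 hind
    exact ((Matrix.isUnit_iff_isUnit_det _).1 hu).ne_zero
  intro h
  rw [det_cons_eq] at hdet
  simp [h] at hdet

lemma cof_int (r : Fin d → (Fin (d+1) → ℝ)) (hr : ∀ i, ∀ j, ∃ z : ℤ, r i j = z)
    (j : Fin (d+1)) : ∃ z : ℤ, cof r j = z := by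
  choose z hz using hr
  set Mz : Matrix (Fin d) (Fin d) ℤ := Matrix.of (fun i j' => z i (j.succAbove j'))
  refine ⟨(-1)^(j:ℕ) * Mz.det, ?_⟩
  have hM : (Matrix.of (fun i j' => r i (j.succAbove j')) : Matrix (Fin d) (Fin d) ℝ)
      = (Int.castRingHom ℝ).mapMatrix Mz := by
    ext i j'; simp [Mz, hz]
  rw [cof, hM, ← RingHom.map_det]
  push_cast
  simp [mul_comm, Int.cast_det]

lemma cof_bound (r : Fin d → (Fin (d+1) → ℝ)) (k : ℝ) (hk : 1 ≤ k)
    (hr : ∀ i, Real.sqrt (∑ j, r i j ^ 2) ≤ k) (j : Fin (d+1)) :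
    |cof r j| ≤ k ^ d := by
  have h := hadamard (Matrix.of (fun i j' => r i (j.succAbove j')))
  have habs : |cof r j| = |(Matrix.of (fun i j' => r i (j.succAbove j'))
      : Matrix (Fin d) (Fin d) ℝ).det| := by
    rw [cof, abs_mul, abs_pow, abs_neg, abs_one, one_pow, one_mul]
  rw [habs]
  refine h.trans ?_
  calc ∏ i : Fin d, Real.sqrt (∑ j' : Fin d, (Matrix.of
        (fun i j' => r i (j.succAbove j')) : Matrix (Fin d) (Fin d) ℝ) i j' ^ 2)
      ≤ ∏ i : Fin d, k := by
        refine Finset.prod_le_prod (fun i _ => Real.sqrt_nonneg _) fun i _ => ?_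
        refine le_trans ?_ (hr i)
        apply Real.sqrt_le_sqrt
        simp only [Matrix.of_apply]
        have : ∑ j' : Fin d, r i (j.succAbove j') ^ 2
            = ∑ j'' ∈ Finset.univ.image j.succAbove, r i j'' ^ 2 := by
          rw [Finset.sum_image (by intro a _ b _ h; exact j.succAbove_right_injective h)]
        rw [this]
        exact Finset.sum_le_sum_of_subset_of_nonneg (Finset.subset_univ _)
          (fun _ _ _ => sq_nonneg _)
    _ = k ^ d := by simp

open Finset Submodule
open scoped RealInnerProductSpace

lemma mem_orth_span_iff {N : ℕ} (S : Set (EuclideanSpace ℝ (Fin N)))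
    (w : EuclideanSpace ℝ (Fin N)) :
    w ∈ (span ℝ S)ᗮ ↔ ∀ s ∈ S, ∑ j, s j * w j = 0 := by
  have hinner : ∀ u : EuclideanSpace ℝ (Fin N), ⟪u, w⟫ = ∑ j, u j * w j := by
    intro u; simp [PiLp.inner_apply, RCLike.inner_apply, conj_trivial, mul_comm]
  rw [Submodule.mem_orthogonal]
  constructor
  · intro h s hs
    rw [← hinner]; exact h s (subset_span hs)
  · intro h u hu
    induction hu using Submodule.span_induction with
    | mem x hx => rw [hinner]; exact h x hx
    | zero => exact inner_zero_left w
    | add x y _ _ hx hy => rw [inner_add_left, hx, hy, add_zero]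
    | smul c x _ hx => rw [real_inner_smul_left, hx, mul_zero]

open Finset Submodule

/-- The set of constraint rows: rows of `A` together with unit vectors off `J`. -/
def rowSet {m d : ℕ} (A : Matrix (Fin m) (Fin (d+1)) ℤ) (J : Finset (Fin (d+1))) :
    Set (EuclideanSpace ℝ (Fin (d+1))) :=
  (Set.range fun i => WithLp.toLp 2 (fun j => (A i j : ℝ))) ∪
    ((fun j => WithLp.toLp 2 (Pi.single j 1 : Fin (d+1) → ℝ)) '' {j : Fin (d+1) | j ∉ J})

lemma rowSet_props {m d : ℕ} (A : Matrix (Fin m) (Fin (d+1)) ℤ)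
    (J : Finset (Fin (d+1))) (k : ℝ) (hk : 1 ≤ k)
    (hA : ∀ i, Real.sqrt (∑ j, ((A i j : ℝ)) ^ 2) ≤ k) :
    ∀ s ∈ rowSet A J, (∀ j, ∃ z : ℤ, s j = z) ∧ Real.sqrt (∑ j, s j ^ 2) ≤ k := by
  rintro s (⟨i, rfl⟩ | ⟨j0, _, rfl⟩)
  · exact ⟨fun j => ⟨A i j, rfl⟩, hA i⟩
  · constructor
    · intro j
      by_cases h : j = j0
      · exact ⟨1, by subst h; simp⟩
      · exact ⟨0, by simp [Pi.single_apply, h]⟩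
    · have : ∑ j, (Pi.single j0 1 : Fin (d+1) → ℝ) j ^ 2 = 1 := by
        rw [Finset.sum_eq_single j0] <;> simp +contextual [Pi.single_apply]
      change √(∑ j, (Pi.single j0 1 : Fin (d+1) → ℝ) j ^ 2) ≤ k
      rw [this, Real.sqrt_one]
      exact hk

lemma caseB {m d : ℕ} (A : Matrix (Fin m) (Fin (d+1)) ℤ) (k : ℝ) (hk : 1 ≤ k)
    (hA : ∀ i, Real.sqrt (∑ j, ((A i j : ℝ)) ^ 2) ≤ k)
    (J : Finset (Fin (d+1))) (v : EuclideanSpace ℝ (Fin (d+1))) (hv0 : v ≠ 0)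
    (hvmem : v ∈ (span ℝ (rowSet A J))ᗮ)
    (hW : ∀ w ∈ (span ℝ (rowSet A J))ᗮ, ∃ c : ℝ, w = c • v) :
    ∃ (h : EuclideanSpace ℝ (Fin (d+1))) (c : ℝ), 0 < c ∧ v = c • h ∧
      (∀ j, ∃ z : ℤ, h j = z) ∧ h ≠ 0 ∧ (∀ j, |h j| ≤ k ^ d) ∧
      h ∈ (span ℝ (rowSet A J))ᗮ := by
  classical
  set U := span ℝ (rowSet A J) with hU
  haveI : FiniteDimensional ℝ (EuclideanSpace ℝ (Fin (d+1))) := by infer_instance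
  -- U has finrank d
  have hperp : Uᗮ = span ℝ {v} := by
    apply le_antisymm
    · intro w hw
      obtain ⟨c, rfl⟩ := hW w hw
      exact Submodule.smul_mem _ _ (subset_span rfl)
    · rw [span_le, Set.singleton_subset_iff]
      exact hvmem
  have hrankperp : Module.finrank ℝ Uᗮ = 1 := by
    rw [hperp]
    exact finrank_span_singleton hv0
  have hrankU : Module.finrank ℝ U = d := by
    have h1 := Submodule.finrank_add_finrank_orthogonal (K := U)
    rw [hrankperp, finrank_euclideanSpace_fin] at h1
    omega
  -- extract a linearly independent spanning subset of rowSet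
  obtain ⟨t, hts, htspan, htind⟩ := exists_linearIndependent ℝ (rowSet A J)
  have htfin : t.Finite := htind.setFinite
  haveI := htfin.fintype
  have htcard : Fintype.card t = d := by
    have := finrank_span_set_eq_card htind
    rw [htspan, ← hU, hrankU] at this
    rw [← Set.toFinset_card]
    omega
  let e : Fin d ≃ t := (Fintype.equivFinOfCardEq htcard).symm
  set r : Fin d → EuclideanSpace ℝ (Fin (d+1)) := fun i => (e i : EuclideanSpace ℝ (Fin (d+1)))
    with hr
  have hrind : LinearIndependent ℝ r := htind.comp e e.injective
  have hrrange : Set.range r = t := by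
    ext y
    constructor
    · rintro ⟨i, rfl⟩; exact (e i).2
    · intro hy; exact ⟨e.symm ⟨y, hy⟩, by simp [hr]⟩
  have hrmem : ∀ i, r i ∈ rowSet A J := fun i => hts (e i).2
  -- the cofactor vector
  set r' : Fin d → (Fin (d+1) → ℝ) := fun i => WithLp.ofLp (r i) with hr'
  have hrind' : LinearIndependent ℝ r' :=
    hrind.map' (WithLp.linearEquiv 2 ℝ (Fin (d+1) → ℝ)).toLinearMap (LinearEquiv.ker _)
  set g : EuclideanSpace ℝ (Fin (d+1)) := WithLp.toLp 2 (cof r') with hg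
  have hinner : ∀ u : EuclideanSpace ℝ (Fin (d+1)), ⟪u, g⟫ = ∑ j, u j * g j := by
    intro u; simp [PiLp.inner_apply, RCLike.inner_apply, conj_trivial, mul_comm]
  have key : ∀ u ∈ span ℝ (Set.range r), ⟪u, g⟫ = 0 := by
    intro u hspan
    induction hspan using Submodule.span_induction with
    | mem x hx =>
        obtain ⟨i, rfl⟩ := hx
        rw [hinner]
        exact cof_orth r' i
    | zero => exact inner_zero_left g
    | add x y _ _ hx hy => rw [inner_add_left, hx, hy, add_zero]
    | smul c x _ hx => rw [real_inner_smul_left, hx, mul_zero]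
  have hgmem : g ∈ Uᗮ := by
    rw [Submodule.mem_orthogonal, hU]
    intro u hu
    exact key u (by rw [hrrange, htspan]; exact hu)
  have hgne : g ≠ 0 := by
    rw [hg, Ne, WithLp.toLp_eq_zero]; exact cof_ne_zero r' hrind'
  obtain ⟨c, hc⟩ := hW g hgmem
  have hcne : c ≠ 0 := by
    rintro rfl
    rw [zero_smul] at hc
    exact hgne hc
  have hint : ∀ j, ∃ z : ℤ, g j = z :=
    cof_int r' (fun i j => (rowSet_props A J k hk hA _ (hrmem i)).1 j)
  have hbound : ∀ j, |g j| ≤ k ^ d :=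
    cof_bound r' k hk (fun i => (rowSet_props A J k hk hA _ (hrmem i)).2)
  rcases lt_or_gt_of_ne hcne with hneg | hpos
  · refine ⟨-g, -c⁻¹, neg_pos.mpr (inv_lt_zero.mpr hneg), ?_, ?_, ?_, ?_, ?_⟩
    · rw [hc]
      rw [show (-c⁻¹) • -(c • v) = (c⁻¹ * c) • v by
        rw [smul_neg, neg_smul, neg_neg, smul_smul]]
      rw [inv_mul_cancel₀ hcne, one_smul]
    · intro j; obtain ⟨z, hz⟩ := hint j; exact ⟨-z, by simp [hz]⟩
    · simpa using hgne
    · intro j; simpa using hbound j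
    · exact Submodule.neg_mem _ hgmem
  · refine ⟨g, c⁻¹, by positivity, ?_, hint, hgne, hbound, hgmem⟩
    rw [hc, smul_smul, inv_mul_cancel₀ hcne, one_smul]

/-- Membership in the cone generated by `G` with nonnegative coefficients. -/
def InCone {N : ℕ} (G : Set (Fin N → ℝ)) (v : Fin N → ℝ) : Prop :=
  ∃ (s : Finset (Fin N → ℝ)) (c : (Fin N → ℝ) → ℝ),
    ↑s ⊆ G ∧ (∀ g, 0 ≤ c g) ∧ v = ∑ g ∈ s, c g • g

lemma InCone_zero {N : ℕ} (G : Set (Fin N → ℝ)) : InCone G 0 :=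
  ⟨∅, fun _ => 0, by simp, fun _ => le_refl _, by simp⟩

lemma InCone_single {N : ℕ} {G : Set (Fin N → ℝ)} {g : Fin N → ℝ} (hg : g ∈ G)
    {c : ℝ} (hc : 0 ≤ c) {v : Fin N → ℝ} (hv : ∀ j, v j = c * g j) : InCone G v := by
  classical
  refine ⟨{g}, fun _ => c, by simpa using hg, fun _ => hc, ?_⟩
  ext j
  simp [hv j]

lemma InCone_combo {N : ℕ} {G : Set (Fin N → ℝ)} {x y v : Fin N → ℝ} {a b : ℝ}
    (hx : InCone G x) (hy : InCone G y) (ha : 0 ≤ a) (hb : 0 ≤ b)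
    (hv : ∀ j, v j = a * x j + b * y j) : InCone G v := by
  classical
  obtain ⟨s₁, c₁, hs₁, hc₁, hx⟩ := hx
  obtain ⟨s₂, c₂, hs₂, hc₂, hy⟩ := hy
  refine ⟨s₁ ∪ s₂, fun g => (if g ∈ s₁ then a * c₁ g else 0) +
    (if g ∈ s₂ then b * c₂ g else 0), ?_, ?_, ?_⟩
  · intro g hg
    rcases Finset.mem_union.1 hg with h | h
    · exact hs₁ h
    · exact hs₂ h
  · intro g
    have h1 : (0:ℝ) ≤ if g ∈ s₁ then a * c₁ g else 0 := by
      split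
      · exact mul_nonneg ha (hc₁ g)
      · exact le_refl _
    have h2 : (0:ℝ) ≤ if g ∈ s₂ then b * c₂ g else 0 := by
      split
      · exact mul_nonneg hb (hc₂ g)
      · exact le_refl _
    exact add_nonneg h1 h2
  · have e1 : ∑ g ∈ s₁ ∪ s₂, (if g ∈ s₁ then a * c₁ g else 0) • g
        = a • ∑ g ∈ s₁, c₁ g • g := by
      rw [Finset.smul_sum]
      rw [← Finset.sum_subset Finset.subset_union_left
        (fun g _ hg => by rw [if_neg hg, zero_smul])]
      refine Finset.sum_congr rfl fun g hg => ?_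
      rw [if_pos hg, smul_smul]
    have e2 : ∑ g ∈ s₁ ∪ s₂, (if g ∈ s₂ then b * c₂ g else 0) • g
        = b • ∑ g ∈ s₂, c₂ g • g := by
      rw [Finset.smul_sum]
      rw [← Finset.sum_subset Finset.subset_union_right
        (fun g _ hg => by rw [if_neg hg, zero_smul])]
      refine Finset.sum_congr rfl fun g hg => ?_
      rw [if_pos hg, smul_smul]
    have : v = a • x + b • y := by
      ext j; simp [hv j]
    rw [this, hx, hy, ← e1, ← e2, ← Finset.sum_add_distrib]
    refine Finset.sum_congr rfl fun g _ => ?_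
    rw [add_smul]

/-- Solutions of the homogeneous system with nonnegativity (no compatibility). -/
def SolK {m d : ℕ} (A : Matrix (Fin m) (Fin (d+1)) ℤ) (v : Fin (d+1) → ℝ) : Prop :=
  (∀ i, ∑ j, (A i j : ℝ) * v j = 0) ∧ ∀ j, 0 ≤ v j

/-- The generators: integral nonzero solutions with coordinates bounded by `k ^ d`. -/
def GSet {m d : ℕ} (A : Matrix (Fin m) (Fin (d+1)) ℤ) (k : ℝ) : Set (Fin (d+1) → ℝ) :=
  {g | SolK A g ∧ (∀ j, ∃ z : ℤ, g j = z) ∧ g ≠ 0 ∧ ∀ j, |g j| ≤ k ^ d}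

lemma mem_orth_rowSet_iff {m d : ℕ} (A : Matrix (Fin m) (Fin (d+1)) ℤ)
    (J : Finset (Fin (d+1))) (w : EuclideanSpace ℝ (Fin (d+1))) :
    w ∈ (span ℝ (rowSet A J))ᗮ ↔
      ((∀ i, ∑ j, (A i j : ℝ) * w j = 0) ∧ ∀ j ∉ J, w j = 0) := by
  rw [mem_orth_span_iff]
  constructor
  · intro h
    constructor
    · intro i; exact h _ (Or.inl ⟨i, rfl⟩)
    · intro j hj
      have := h _ (Or.inr ⟨j, hj, rfl⟩)
      rw [Finset.sum_eq_single j (fun j' _ hj' => by simp [Pi.single_apply, Ne.symm hj'])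
        (by simp)] at this
      simpa using this
  · rintro ⟨h1, h2⟩ s hs
    rcases hs with ⟨i, rfl⟩ | ⟨j0, hj0, rfl⟩
    · exact h1 i
    · rw [Finset.sum_eq_single j0 (fun j' _ hj' => by simp [Pi.single_apply, Ne.symm hj'])
        (by simp)]
      simpa using h2 j0 hj0

lemma decomp {m d : ℕ} (A : Matrix (Fin m) (Fin (d+1)) ℤ) (k : ℝ) (hk : 1 ≤ k)
    (hA : ∀ i, Real.sqrt (∑ j, ((A i j : ℝ)) ^ 2) ≤ k) :
    ∀ (J : Finset (Fin (d+1))) (v : Fin (d+1) → ℝ),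
      SolK A v → (∀ j, v j ≠ 0 → j ∈ J) → InCone (GSet A k) v := by
  classical
  intro J
  induction J using Finset.strongInduction with
  | _ J ih =>
  intro v hv hsupp
  rcases eq_or_ne v 0 with rfl | hv0
  · exact InCone_zero _
  by_cases hJ' : J.filter (fun j => v j ≠ 0) = J
  case neg =>
    exact ih _ ((Finset.filter_subset _ _).ssubset_of_ne hJ') v hv
      (fun j hj => Finset.mem_filter.2 ⟨hsupp j hj, hj⟩)
  -- now every index in J carries a positive coordinate of v
  have hposJ : ∀ j ∈ J, 0 < v j := by
    intro j hj
    rw [← hJ'] at hj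
    exact (hv.2 j).lt_of_ne (Ne.symm (Finset.mem_filter.1 hj).2)
  have hvJ : ∀ j, j ∉ J → v j = 0 := by
    intro j hj
    by_contra h
    exact hj (hsupp j h)
  have hvmem : WithLp.toLp 2 v ∈ (span ℝ (rowSet A J))ᗮ :=
    (mem_orth_rowSet_iff A J (WithLp.toLp 2 v)).2 ⟨hv.1, hvJ⟩
  by_cases hW : ∀ w ∈ (span ℝ (rowSet A J))ᗮ, ∃ c : ℝ, w = c • WithLp.toLp 2 v
  · -- base case: the orthogonal complement is one-dimensional
    obtain ⟨h, c, hcpos, hvch, hint, hne, hbd, hmem⟩ := caseB A k hk hA J (WithLp.toLp 2 v)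
      (by rw [Ne, WithLp.toLp_eq_zero]; exact hv0) hvmem hW
    have hco : ∀ j, v j = c * h j := by
      intro j
      have := congrArg (fun u : EuclideanSpace ℝ (Fin (d+1)) => u j) hvch
      simpa using this
    have hhnn : ∀ j, 0 ≤ h j := by
      intro j
      have := hv.2 j
      rw [hco j] at this
      nlinarith [hcpos]
    have hhG : WithLp.ofLp h ∈ GSet A k :=
      ⟨⟨((mem_orth_rowSet_iff A J h).1 hmem).1, hhnn⟩, hint,
        (by rw [Ne, WithLp.ofLp_eq_zero]; exact hne), hbd⟩
    exact InCone_single hhG hcpos.le hco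
  · -- inductive case: find a second independent direction w
    have hex : ∃ w : EuclideanSpace ℝ (Fin (d+1)), w ∈ (span ℝ (rowSet A J))ᗮ ∧
        ∀ c : ℝ, w ≠ c • (WithLp.toLp 2 v) := by
      by_contra hcon
      apply hW
      intro w hw
      rcases Classical.em (∃ c : ℝ, w = c • (WithLp.toLp 2 v))
        with h | h
      · exact h
      · exact absurd ⟨w, hw, fun c hc => h ⟨c, hc⟩⟩ hcon
    obtain ⟨w₀, hw₀mem, hw₀nc⟩ := hex
    -- normalize w to have a positive coordinate
    obtain ⟨w, hwmem, hwnc, j₀, hj₀pos⟩ :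
        ∃ w : EuclideanSpace ℝ (Fin (d+1)), w ∈ (span ℝ (rowSet A J))ᗮ ∧ (∀ c : ℝ, w ≠ c • (WithLp.toLp 2 v)) ∧ ∃ j₀, 0 < w j₀ := by
      have hw0ne : w₀ ≠ 0 := by
        intro h; exact hw₀nc 0 (by rw [h, zero_smul])
      obtain ⟨j₀, hj₀⟩ : ∃ j₀, w₀ j₀ ≠ 0 := by
        by_contra h
        push_neg at h
        exact hw0ne (by ext j; simpa using h j)
      rcases lt_or_gt_of_ne hj₀ with hneg | hpos
      · refine ⟨-w₀, Submodule.neg_mem _ hw₀mem, ?_, j₀, ?_⟩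
        · intro c hc
          apply hw₀nc (-c)
          rw [neg_smul, ← hc, neg_neg]
        · simpa using hneg
      · exact ⟨w₀, hw₀mem, hw₀nc, j₀, hpos⟩
    obtain ⟨hwA, hwJ⟩ := (mem_orth_rowSet_iff A J w).1 hwmem
    have hj₀J : j₀ ∈ J := by
      by_contra h
      rw [hwJ j₀ h] at hj₀pos
      exact lt_irrefl _ hj₀pos
    -- first exit time
    set P := J.filter (fun j => 0 < w j) with hP
    have hPne : P.Nonempty := ⟨j₀, Finset.mem_filter.2 ⟨hj₀J, hj₀pos⟩⟩
    set t₁ := P.inf' hPne (fun j => v j / w j) with ht₁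
    obtain ⟨j₁, hj₁P, hj₁⟩ := P.exists_mem_eq_inf' hPne (fun j => v j / w j)
    have hj₁J : j₁ ∈ J := (Finset.mem_filter.1 hj₁P).1
    have hwj₁ : 0 < w j₁ := (Finset.mem_filter.1 hj₁P).2
    have ht₁pos : 0 < t₁ := by
      rw [ht₁, Finset.lt_inf'_iff]
      intro j hj
      exact div_pos (hposJ j (Finset.mem_filter.1 hj).1) (Finset.mem_filter.1 hj).2
    set v₁ : Fin (d+1) → ℝ := fun j => v j - t₁ * w j with hv₁
    have hv₁sol : SolK A v₁ := by
      constructor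
      · intro i
        have : ∑ j, (A i j : ℝ) * (v j - t₁ * w j)
            = ∑ j, (A i j : ℝ) * v j - t₁ * ∑ j, (A i j : ℝ) * w j := by
          rw [Finset.mul_sum, ← Finset.sum_sub_distrib]
          refine Finset.sum_congr rfl fun j _ => by ring
        rw [hv₁]
        simp only []
        rw [this, hv.1 i, hwA i]
        ring
      · intro j
        rw [hv₁]
        simp only []
        rcases le_or_gt (w j) 0 with hw | hw
        · have : 0 ≤ -(t₁ * w j) := by nlinarith
          linarith [hv.2 j]
        · have hjJ : j ∈ J := by
            by_contra h
            rw [hwJ j h] at hw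
            exact lt_irrefl _ hw
          have : t₁ ≤ v j / w j := by
            rw [ht₁]
            exact Finset.inf'_le _ (Finset.mem_filter.2 ⟨hjJ, hw⟩)
          rw [sub_nonneg]
          calc t₁ * w j ≤ (v j / w j) * w j := by nlinarith
            _ = v j := by field_simp
    have hv₁supp : ∀ j, v₁ j ≠ 0 → j ∈ J.erase j₁ := by
      intro j hj
      rw [Finset.mem_erase]
      constructor
      · rintro rfl
        apply hj
        rw [hv₁]
        simp only []
        rw [hj₁] at ht₁
        rw [ht₁]
        field_simp
        ring
      · by_contra h
        apply hj
        rw [hv₁]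
        simp only []
        rw [hvJ j h, hwJ j h]
        ring
    have hc₁ : InCone (GSet A k) v₁ :=
      ih _ (Finset.erase_ssubset hj₁J) v₁ hv₁sol hv₁supp
    by_cases hneg : ∃ j, w j < 0
    · -- second exit time on the negative side
      obtain ⟨jn, hjn⟩ := hneg
      have hjnJ : jn ∈ J := by
        by_contra h
        rw [hwJ jn h] at hjn
        exact lt_irrefl _ hjn
      set N := J.filter (fun j => w j < 0) with hN
      have hNne : N.Nonempty := ⟨jn, Finset.mem_filter.2 ⟨hjnJ, hjn⟩⟩
      set t₂ := N.inf' hNne (fun j => v j / (- w j)) with ht₂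
      obtain ⟨j₂, hj₂N, hj₂⟩ := N.exists_mem_eq_inf' hNne (fun j => v j / (- w j))
      have hj₂J : j₂ ∈ J := (Finset.mem_filter.1 hj₂N).1
      have hwj₂ : w j₂ < 0 := (Finset.mem_filter.1 hj₂N).2
      have ht₂pos : 0 < t₂ := by
        rw [ht₂, Finset.lt_inf'_iff]
        intro j hj
        exact div_pos (hposJ j (Finset.mem_filter.1 hj).1)
          (by linarith [(Finset.mem_filter.1 hj).2])
      set v₂ : Fin (d+1) → ℝ := fun j => v j + t₂ * w j with hv₂
      have hv₂sol : SolK A v₂ := by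
        constructor
        · intro i
          have : ∑ j, (A i j : ℝ) * (v j + t₂ * w j)
              = ∑ j, (A i j : ℝ) * v j + t₂ * ∑ j, (A i j : ℝ) * w j := by
            rw [Finset.mul_sum, ← Finset.sum_add_distrib]
            refine Finset.sum_congr rfl fun j _ => by ring
          rw [hv₂]
          simp only []
          rw [this, hv.1 i, hwA i]
          ring
        · intro j
          rw [hv₂]
          simp only []
          rcases le_or_gt 0 (w j) with hw | hw
          · have : 0 ≤ t₂ * w j := by nlinarith
            linarith [hv.2 j]
          · have hjJ : j ∈ J := by
              by_contra h
              rw [hwJ j h] at hw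
              exact lt_irrefl _ hw
            have : t₂ ≤ v j / (- w j) := by
              rw [ht₂]
              exact Finset.inf'_le _ (Finset.mem_filter.2 ⟨hjJ, hw⟩)
            have hwn : 0 < - w j := by linarith
            have : t₂ * (- w j) ≤ v j := by
              calc t₂ * (- w j) ≤ (v j / (- w j)) * (- w j) := by nlinarith
                _ = v j := div_mul_cancel₀ _ (by linarith : -w j ≠ 0)
            linarith
      have hv₂supp : ∀ j, v₂ j ≠ 0 → j ∈ J.erase j₂ := by
        intro j hj
        rw [Finset.mem_erase]
        constructor
        · rintro rfl
          apply hj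
          rw [hv₂]
          simp only []
          rw [hj₂] at ht₂
          rw [ht₂]
          have h0 : w j ≠ 0 := ne_of_lt hwj₂
          field_simp
          ring
        · by_contra h
          apply hj
          rw [hv₂]
          simp only []
          rw [hvJ j h, hwJ j h]
          ring
      have hc₂ : InCone (GSet A k) v₂ :=
        ih _ (Finset.erase_ssubset hj₂J) v₂ hv₂sol hv₂supp
      refine InCone_combo hc₁ hc₂ (a := t₂ / (t₁ + t₂)) (b := t₁ / (t₁ + t₂))
        (by positivity) (by positivity) ?_
      intro j
      rw [hv₁, hv₂]
      simp only []
      have hts : t₁ + t₂ ≠ 0 := by positivity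
      field_simp
      ring
    · -- w is itself nonnegative: subtract a multiple of v from w
      push_neg at hneg
      have hJne : J.Nonempty := ⟨j₀, hj₀J⟩
      set s₀ := J.inf' hJne (fun j => w j / v j) with hs₀
      obtain ⟨j₂, hj₂J, hj₂⟩ := J.exists_mem_eq_inf' hJne (fun j => w j / v j)
      have hs₀nn : 0 ≤ s₀ := by
        rw [hs₀, Finset.le_inf'_iff]
        intro j hj
        exact div_nonneg (hneg j) (hposJ j hj).le
      set w₁ : Fin (d+1) → ℝ := fun j => w j - s₀ * v j with hw₁
      have hw₁sol : SolK A w₁ := by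
        constructor
        · intro i
          have : ∑ j, (A i j : ℝ) * (w j - s₀ * v j)
              = ∑ j, (A i j : ℝ) * w j - s₀ * ∑ j, (A i j : ℝ) * v j := by
            rw [Finset.mul_sum, ← Finset.sum_sub_distrib]
            refine Finset.sum_congr rfl fun j _ => by ring
          rw [hw₁]
          simp only []
          rw [this, hv.1 i, hwA i]
          ring
        · intro j
          rw [hw₁]
          simp only []
          by_cases hjJ : j ∈ J
          · have : s₀ ≤ w j / v j := by
              rw [hs₀]
              exact Finset.inf'_le _ hjJ
            have hvj : 0 < v j := hposJ j hjJ
            rw [sub_nonneg]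
            calc s₀ * v j ≤ (w j / v j) * v j := by nlinarith
              _ = w j := by field_simp
          · rw [hvJ j hjJ, hwJ j hjJ]
            simp
      have hw₁supp : ∀ j, w₁ j ≠ 0 → j ∈ J.erase j₂ := by
        intro j hj
        rw [Finset.mem_erase]
        constructor
        · rintro rfl
          apply hj
          rw [hw₁]
          simp only []
          rw [hj₂] at hs₀
          rw [hs₀]
          have : v j ≠ 0 := (hposJ j hj₂J).ne'
          field_simp
          ring
        · by_contra h
          apply hj
          rw [hw₁]
          simp only []
          rw [hvJ j h, hwJ j h]
          ring
      have hcw : InCone (GSet A k) w₁ :=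
        ih _ (Finset.erase_ssubset hj₂J) w₁ hw₁sol hw₁supp
      -- the key scalar bound
      have hts : t₁ * s₀ ≤ 1 := by
        have h1 : t₁ = v j₁ / w j₁ := hj₁
        have h2 : s₀ ≤ w j₁ / v j₁ := by
          rw [hs₀]
          exact Finset.inf'_le _ hj₁J
        have hvj₁ : 0 < v j₁ := hposJ j₁ hj₁J
        calc t₁ * s₀ ≤ (v j₁ / w j₁) * (w j₁ / v j₁) := by
              rw [h1]
              exact mul_le_mul_of_nonneg_left h2 (by positivity)
          _ = 1 := by field_simp
      have hkey : ∀ j, v₁ j + t₁ * w₁ j = (1 - t₁ * s₀) * v j := by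
        intro j
        rw [hv₁, hw₁]
        simp only []
        ring
      rcases eq_or_lt_of_le hts with heq | hlt
      · -- degenerate case: w is proportional to v, contradiction
        exfalso
        have hzero : ∀ j, v₁ j + t₁ * w₁ j = 0 := by
          intro j
          rw [hkey j, ← heq]
          ring
        have hw₁zero : ∀ j, w₁ j = 0 := by
          intro j
          have h1 := hv₁sol.2 j
          have h2 := hw₁sol.2 j
          have := hzero j
          nlinarith
        apply hwnc s₀
        ext j
        have := hw₁zero j
        rw [hw₁] at this
        simp only [] at this
        have : w j = s₀ * v j := by linarith
        simpa [Pi.smul_apply] using this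
      · have hpos1 : 0 < 1 - t₁ * s₀ := by linarith
        refine InCone_combo hc₁ hcw (a := (1 - t₁ * s₀)⁻¹) (b := t₁ * (1 - t₁ * s₀)⁻¹)
          (by positivity) (by positivity) ?_
        intro j
        have := hkey j
        field_simp
        linarith [hkey j]

lemma carath_aux {N : ℕ} : ∀ (n : ℕ) (s : Finset (Fin N → ℝ)) (c : (Fin N → ℝ) → ℝ),
    s.card = n → (∀ g, 0 ≤ c g) →
    ∃ (s' : Finset (Fin N → ℝ)) (c' : (Fin N → ℝ) → ℝ), s' ⊆ s ∧ (∀ g, 0 ≤ c' g) ∧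
      ∑ g ∈ s', c' g • g = ∑ g ∈ s, c g • g ∧ s'.card ≤ N := by
  classical
  intro n
  induction n using Nat.strong_induction_on with
  | _ n ihn =>
  intro s c hcard hc
  by_cases hind : LinearIndependent ℝ (fun g : {x : Fin N → ℝ // x ∈ s} => (g : Fin N → ℝ))
  · refine ⟨s, c, subset_rfl, hc, rfl, ?_⟩
    have h1 := hind.fintype_card_le_finrank
    rwa [Module.finrank_fintype_fun_eq_card, Fintype.card_fin, Fintype.card_coe] at h1
  · -- find a nontrivial relation with a positive coefficient
    rw [Fintype.not_linearIndependent_iff] at hind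
    obtain ⟨f, hfsum, i₀, hfi₀⟩ := hind
    have hrel : ∀ f : {x : Fin N → ℝ // x ∈ s} → ℝ, (∑ i, f i • (i : Fin N → ℝ)) =
        ∑ g ∈ s, (fun g => if hg : g ∈ s then f ⟨g, hg⟩ else 0) g • g := by
      intro f
      rw [← Finset.sum_attach s (fun g => (fun g => if hg : g ∈ s then f ⟨g, hg⟩ else 0) g • g)]
      refine Finset.sum_congr rfl fun i _ => by simp [i.2]
    obtain ⟨μ, hμsum, g₀', hg₀'mem, hg₀'pos⟩ :
        ∃ μ : (Fin N → ℝ) → ℝ, (∑ g ∈ s, μ g • g = 0) ∧ ∃ g₀ ∈ s, 0 < μ g₀ := by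
      rcases lt_or_gt_of_ne hfi₀ with hneg | hpos
      · refine ⟨fun g => if hg : g ∈ s then -f ⟨g, hg⟩ else 0, ?_, i₀, i₀.2, ?_⟩
        · rw [← hrel (fun i => -f i)]
          simp only [neg_smul, Finset.sum_neg_distrib, hfsum, neg_zero]
        · simp only [Subtype.coe_eta, dif_pos i₀.2]
          simpa using hneg
      · refine ⟨fun g => if hg : g ∈ s then f ⟨g, hg⟩ else 0, ?_, i₀, i₀.2, ?_⟩
        · rw [← hrel f, hfsum]
        · simp only [Subtype.coe_eta, dif_pos i₀.2]
          exact hpos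
    set P := s.filter (fun g => 0 < μ g) with hP
    have hPne : P.Nonempty := ⟨g₀', Finset.mem_filter.2 ⟨hg₀'mem, hg₀'pos⟩⟩
    set r := P.inf' hPne (fun g => c g / μ g) with hr
    obtain ⟨g₀, hg₀P, hg₀⟩ := P.exists_mem_eq_inf' hPne (fun g => c g / μ g)
    have hg₀s : g₀ ∈ s := (Finset.mem_filter.1 hg₀P).1
    have hμg₀ : 0 < μ g₀ := (Finset.mem_filter.1 hg₀P).2
    have hrnn : 0 ≤ r := by
      rw [hr, Finset.le_inf'_iff]
      intro g hg
      exact div_nonneg (hc g) (Finset.mem_filter.1 hg).2.le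
    set c' : (Fin N → ℝ) → ℝ := fun g => if g ∈ s then c g - r * μ g else 0 with hc'
    have hc'nn : ∀ g, 0 ≤ c' g := by
      intro g
      rw [hc']
      simp only []
      split
      case isTrue hg =>
        rcases le_or_gt (μ g) 0 with hμ | hμ
        · nlinarith [hc g]
        · have : r ≤ c g / μ g := by
            rw [hr]
            exact Finset.inf'_le _ (Finset.mem_filter.2 ⟨hg, hμ⟩)
          have : r * μ g ≤ (c g / μ g) * μ g := by nlinarith
          have heq : (c g / μ g) * μ g = c g := div_mul_cancel₀ _ (ne_of_gt hμ)
          linarith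
      case isFalse => exact le_refl _
    have hc'g₀ : c' g₀ = 0 := by
      rw [hc']
      simp only [if_pos hg₀s]
      rw [hg₀] at hr
      rw [hr]
      field_simp
      ring
    have hsum' : ∑ g ∈ s.erase g₀, c' g • g = ∑ g ∈ s, c g • g := by
      rw [Finset.sum_erase _ (by rw [hc'g₀, zero_smul])]
      have : ∑ g ∈ s, c' g • g = ∑ g ∈ s, (c g • g - r • (μ g • g)) := by
        refine Finset.sum_congr rfl fun g hg => ?_
        rw [hc']
        simp only [if_pos hg]
        rw [sub_smul, smul_smul]
      rw [this, Finset.sum_sub_distrib, ← Finset.smul_sum, hμsum, smul_zero, sub_zero]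
    obtain ⟨s', c'', hsub, hnn, heq, hcard'⟩ := ihn (s.erase g₀).card
      (by rw [← hcard]; exact Finset.card_lt_card (Finset.erase_ssubset hg₀s))
      (s.erase g₀) c' rfl hc'nn
    exact ⟨s', c'', hsub.trans (Finset.erase_subset _ _), hnn, by rw [heq, hsum'], hcard'⟩




/-- A solution to the system Σ: `A x = 0`, all coordinates nonnegative, and for each
pair `(i, j)` in `C`, `x i = 0` or `x j = 0`. -/
def IsSolution {m n : ℕ} (A : Matrix (Fin m) (Fin n) ℤ)
    (C : Finset (Fin n × Fin n)) (x : Fin n → ℝ) : Prop :=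
  (∀ i : Fin m, ∑ j : Fin n, (A i j : ℝ) * x j = 0) ∧
    (∀ j : Fin n, 0 ≤ x j) ∧
    (∀ p ∈ C, x p.1 = 0 ∨ x p.2 = 0)

/-- A vector is integral if every coordinate is an integer. -/
def IsIntegralVec {n : ℕ} (x : Fin n → ℝ) : Prop :=
  ∀ j : Fin n, ∃ z : ℤ, x j = (z : ℝ)

/-- An integral solution `x` is a vertex solution if (i) whenever `k • x = y + z` for a
positive real `k` and solutions `y`, `z`, both `y` and `z` are scalar multiples of `x`;
and (ii) `x` is not `k • y` for an integer `k ≥ 2` and an integral solution `y`. -/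
def IsVertexSolution {m n : ℕ} (A : Matrix (Fin m) (Fin n) ℤ)
    (C : Finset (Fin n × Fin n)) (x : Fin n → ℝ) : Prop :=
  IsSolution A C x ∧ IsIntegralVec x ∧
    (∀ k : ℝ, 0 < k → ∀ y z : Fin n → ℝ, IsSolution A C y → IsSolution A C z →
      k • x = y + z → (∃ c : ℝ, y = c • x) ∧ ∃ c : ℝ, z = c • x) ∧
    ¬∃ (k : ℤ) (y : Fin n → ℝ), 2 ≤ k ∧ IsSolution A C y ∧ IsIntegralVec y ∧
      x = (k : ℝ) • y

/-- An integral solution is fundamental if it is not the sum of two nonzero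
integral solutions. -/
def IsFundamental {m n : ℕ} (A : Matrix (Fin m) (Fin n) ℤ)
    (C : Finset (Fin n × Fin n)) (x : Fin n → ℝ) : Prop :=
  IsSolution A C x ∧ IsIntegralVec x ∧
    ¬∃ y z : Fin n → ℝ, IsSolution A C y ∧ IsIntegralVec y ∧
      IsSolution A C z ∧ IsIntegralVec z ∧ y ≠ 0 ∧ z ≠ 0 ∧ x = y + z

/-- Theorem 8.1(2): if every row of `A` has ℓ² norm at most `k ≥ 1`, then every
coordinate of every fundamental solution to the system Σ is at most `n^(3/2) * k^(n-1)`. -/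
theorem fundamental_solution_coord_bound {m n : ℕ} (hm : 0 < m) (hn : 0 < n)
    (A : Matrix (Fin m) (Fin n) ℤ) (C : Finset (Fin n × Fin n))
    (k : ℝ) (hk : 1 ≤ k)
    (hA : ∀ i : Fin m, Real.sqrt (∑ j : Fin n, ((A i j : ℝ)) ^ 2) ≤ k)
    (x : Fin n → ℝ) (hx : IsFundamental A C x) (j : Fin n) :
    x j ≤ (n : ℝ) ^ ((3 : ℝ) / 2) * k ^ (n - 1) := by
  classical
  obtain ⟨d, rfl⟩ : ∃ d, n = d + 1 := ⟨n - 1, (Nat.succ_pred_eq_of_pos hn).symm⟩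
  obtain ⟨hxsol, hxint, hxnosplit⟩ := hx
  have hk0 : (0:ℝ) < k := lt_of_lt_of_le one_pos hk
  have hkd : (0:ℝ) < k ^ d := pow_pos hk0 d
  have hxk : SolK A x := ⟨hxsol.1, hxsol.2.1⟩
  -- decompose x into at most d+1 bounded integral generators
  obtain ⟨s, c, hsG, hc, hsum⟩ := decomp A k hk hA Finset.univ x hxk
    (fun _ _ => Finset.mem_univ _)
  obtain ⟨s', c', hs's, hc', hsum', hcard⟩ := carath_aux s.card s c rfl hc
  rw [← hsum] at hsum'
  have hs'G : ↑s' ⊆ GSet A k := fun g hg => hsG (hs's hg)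
  have hxco : ∀ jj, x jj = ∑ g ∈ s', c' g * g jj := by
    intro jj
    have := congrFun hsum'.symm jj
    simpa [Finset.sum_apply] using this
  -- each summand is nonnegative
  have hterm_nn : ∀ jj, ∀ g ∈ s', 0 ≤ c' g * g jj := by
    intro jj g hg
    exact mul_nonneg (hc' g) ((hs'G hg).1.2 jj)
  -- coordinates vanish together with those of x
  have hcoordzero : ∀ jj, x jj = 0 → ∀ g ∈ s', 0 < c' g → g jj = 0 := by
    intro jj hzero g hg hcpos
    have h1 : ∑ g ∈ s', c' g * g jj = 0 := by rw [← hxco jj, hzero]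
    have h2 := (Finset.sum_eq_zero_iff_of_nonneg (fun g hg => hterm_nn jj g hg)).1 h1 g hg
    rcases mul_eq_zero.1 h2 with h | h
    · exact absurd h (ne_of_gt hcpos)
    · exact h
  have hbd1 : (1:ℝ) ≤ ((d+1 : ℕ) : ℝ) ^ ((3:ℝ)/2) := by
    have h1 : (1:ℝ) ≤ ((d+1 : ℕ) : ℝ) := by exact_mod_cast Nat.succ_le_succ (Nat.zero_le d)
    calc (1:ℝ) = ((d+1:ℕ):ℝ) ^ (0:ℝ) := by rw [Real.rpow_zero]
      _ ≤ ((d+1:ℕ):ℝ) ^ ((3:ℝ)/2) := Real.rpow_le_rpow_of_exponent_le h1 (by norm_num)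
  have hnm : d + 1 - 1 = d := by omega
  rw [hnm]
  by_cases hbig : ∃ g ∈ s', 1 ≤ c' g ∧ g ≠ x
  · -- x splits as g + (x - g): contradiction with fundamentality
    exfalso
    obtain ⟨g, hgs', hcg, hgx⟩ := hbig
    have hgG := hs'G hgs'
    have hgle : ∀ jj, g jj ≤ x jj := by
      intro jj
      rw [hxco jj]
      calc g jj = 1 * g jj := (one_mul _).symm
        _ ≤ c' g * g jj := mul_le_mul_of_nonneg_right hcg (hgG.1.2 jj)
        _ ≤ ∑ g' ∈ s', c' g' * g' jj :=
            Finset.single_le_sum (fun g' hg' => hterm_nn jj g' hg') hgs'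
    have hgzero : ∀ jj, x jj = 0 → g jj = 0 :=
      fun jj h => hcoordzero jj h g hgs' (lt_of_lt_of_le one_pos hcg)
    refine hxnosplit ⟨g, x - g, ?_, hgG.2.1, ?_, ?_, hgG.2.2.1, ?_, ?_⟩
    · exact ⟨hgG.1.1, hgG.1.2, fun p hp => by
        rcases hxsol.2.2 p hp with h | h
        · exact Or.inl (hgzero _ h)
        · exact Or.inr (hgzero _ h)⟩
    · refine ⟨?_, ?_, ?_⟩
      · intro i
        have : ∑ jj, (A i jj : ℝ) * (x jj - g jj)
            = ∑ jj, (A i jj : ℝ) * x jj - ∑ jj, (A i jj : ℝ) * g jj := by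
          rw [← Finset.sum_sub_distrib]
          exact Finset.sum_congr rfl fun jj _ => by ring
        simpa [this, hxsol.1 i, hgG.1.1 i] using by simp [Pi.sub_apply]
      · intro jj
        simp only [Pi.sub_apply, sub_nonneg]
        exact hgle jj
      · intro p hp
        rcases hxsol.2.2 p hp with h | h
        · exact Or.inl (by simp [Pi.sub_apply, h, hgzero _ h])
        · exact Or.inr (by simp [Pi.sub_apply, h, hgzero _ h])
    · intro jj
      obtain ⟨z1, hz1⟩ := hxint jj
      obtain ⟨z2, hz2⟩ := hgG.2.1 jj
      exact ⟨z1 - z2, by simp [Pi.sub_apply, hz1, hz2]⟩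
    · intro h
      apply hgx
      have : x - g = 0 := h
      ext jj
      have := congrFun this jj
      simp only [Pi.sub_apply, Pi.zero_apply] at this
      linarith
    · ext jj; simp
  · push_neg at hbig
    by_cases hone : ∃ g ∈ s', 1 ≤ c' g
    · -- then x itself is a generator, bounded by k ^ d
      obtain ⟨g, hgs', hcg⟩ := hone
      have hgeq : g = x := hbig g hgs' hcg
      have hgG := hs'G hgs'
      have : x j ≤ k ^ d := by
        rw [← hgeq]
        exact le_trans (le_abs_self _) (hgG.2.2.2 j)
      calc x j ≤ k ^ d := this
        _ = 1 * k ^ d := (one_mul _).symm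
        _ ≤ ((d+1 : ℕ) : ℝ) ^ ((3:ℝ)/2) * k ^ d :=
            mul_le_mul_of_nonneg_right hbd1 hkd.le
    · -- all coefficients are < 1
      push_neg at hone
      have hxj : x j ≤ (s'.card : ℝ) * k ^ d := by
        rw [hxco j]
        calc ∑ g ∈ s', c' g * g j ≤ ∑ g ∈ s', k ^ d := by
              refine Finset.sum_le_sum fun g hg => ?_
              have hgG := hs'G hg
              have h1 : g j ≤ k ^ d := le_trans (le_abs_self _) (hgG.2.2.2 j)
              have h2 : c' g < 1 := hone g hg
              have h3 : 0 ≤ g j := hgG.1.2 j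
              nlinarith [hc' g]
          _ = (s'.card : ℝ) * k ^ d := by rw [Finset.sum_const, nsmul_eq_mul]
      have hcard' : (s'.card : ℝ) ≤ ((d+1 : ℕ) : ℝ) := by exact_mod_cast hcard
      have hrpow : ((d+1 : ℕ) : ℝ) ≤ ((d+1 : ℕ) : ℝ) ^ ((3:ℝ)/2) := by
        have h1 : (1:ℝ) ≤ ((d+1 : ℕ) : ℝ) := by exact_mod_cast Nat.succ_le_succ (Nat.zero_le d)
        calc ((d+1:ℕ):ℝ) = ((d+1:ℕ):ℝ) ^ (1:ℝ) := by rw [Real.rpow_one]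
          _ ≤ ((d+1:ℕ):ℝ) ^ ((3:ℝ)/2) := Real.rpow_le_rpow_of_exponent_le h1 (by norm_num)
      calc x j ≤ (s'.card : ℝ) * k ^ d := hxj
        _ ≤ ((d+1 : ℕ) : ℝ) ^ ((3:ℝ)/2) * k ^ d := by
            refine mul_le_mul_of_nonneg_right (hcard'.trans hrpow) hkd.le
end

section
/- Every solution x ∈ ℝⁿ to the system Σ can be written as a nonnegative linear combination of at most n vertex solutions: there exist an integer m' with 0 ≤ m' ≤ n, nonnegative real numbers λ_1, …, λ_{m'}, and vertex solutions v_1, …, v_{m'} to Σ such that x = λ_1·v_1 + ⋯ + λ_{m'}·v_{m'}. -/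
open Matrix
open scoped Classical


lemma exists_rat_kernel {ι n : Type*} [Fintype ι] [Fintype n] [DecidableEq n]
    (B : Matrix ι n ℚ) (v : n → ℝ) (hv : v ≠ 0)
    (h : (B.map ((↑) : ℚ → ℝ)).mulVec v = 0) :
    ∃ q : n → ℚ, q ≠ 0 ∧ B.mulVec q = 0 := by
  set BR := B.map ((↑) : ℚ → ℝ) with hBR
  have h1 : v ∈ LinearMap.ker (Matrix.mulVecLin (BRᵀ * BR)) := by
    rw [Matrix.ker_mulVecLin_transpose_mul_self, LinearMap.mem_ker, Matrix.mulVecLin_apply]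
    exact h
  have hdetR : (BRᵀ * BR).det = 0 := by
    rw [← Matrix.exists_mulVec_eq_zero_iff]
    refine ⟨v, hv, ?_⟩
    have h1' := LinearMap.mem_ker.mp h1
    rwa [Matrix.mulVecLin_apply] at h1'
  have hcast : BRᵀ * BR = ((Bᵀ * B).map ((Rat.castHom ℝ) : ℚ →+* ℝ)) := by
    rw [Matrix.map_mul, hBR, Matrix.transpose_map]
    rfl
  have hdetQ : (Bᵀ * B).det = 0 := by
    have h2 : ((Bᵀ * B).det : ℝ) = 0 := by
      rw [hcast] at hdetR
      rw [show ((Bᵀ * B).map ⇑(Rat.castHom ℝ)) = (Rat.castHom ℝ).mapMatrix (Bᵀ * B) from rfl,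
        ← RingHom.map_det] at hdetR
      exact hdetR
    exact_mod_cast h2
  obtain ⟨q, hq0, hq⟩ := (Matrix.exists_mulVec_eq_zero_iff).mpr hdetQ
  refine ⟨q, hq0, ?_⟩
  have h3 : q ∈ LinearMap.ker (Matrix.mulVecLin (Bᵀ * B)) := by
    rw [LinearMap.mem_ker, Matrix.mulVecLin_apply]
    exact hq
  rw [Matrix.ker_mulVecLin_transpose_mul_self] at h3
  have h3' := LinearMap.mem_ker.mp h3
  rwa [Matrix.mulVecLin_apply] at h3'

lemma IsSolution.smul {m n : ℕ} {A : Matrix (Fin m) (Fin n) ℤ}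
    {C : Finset (Fin n × Fin n)} {x : Fin n → ℝ} (hx : IsSolution A C x)
    {t : ℝ} (ht : 0 ≤ t) : IsSolution A C (t • x) := by
  obtain ⟨h1, h2, h3⟩ := hx
  refine ⟨fun i => ?_, fun j => ?_, fun p hp => ?_⟩
  · have : ∑ j : Fin n, (A i j : ℝ) * (t * x j) = t * ∑ j : Fin n, (A i j : ℝ) * x j := by
      rw [Finset.mul_sum]; congr 1; ext j; ring
    simp only [Pi.smul_apply, smul_eq_mul, this, h1 i, mul_zero]
  · exact mul_nonneg ht (h2 j)
  · rcases h3 p hp with h | h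
    · exact Or.inl (by simp [Pi.smul_apply, h])
    · exact Or.inr (by simp [Pi.smul_apply, h])

noncomputable def faceMatrix {m n : ℕ} (A : Matrix (Fin m) (Fin n) ℤ)
    (x : Fin n → ℝ) : Matrix (Fin m ⊕ Fin n) (Fin n) ℚ :=
  Matrix.of fun i j => match i with
    | .inl i => (A i j : ℚ)
    | .inr i => if x i = 0 ∧ i = j then 1 else 0

lemma faceMatrix_real_kernel {m n : ℕ} (A : Matrix (Fin m) (Fin n) ℤ)
    (x : Fin n → ℝ) (v : Fin n → ℝ)
    (h1 : ∀ i : Fin m, ∑ j : Fin n, (A i j : ℝ) * v j = 0)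
    (h2 : ∀ j : Fin n, x j = 0 → v j = 0) :
    ((faceMatrix A x).map ((↑) : ℚ → ℝ)).mulVec v = 0 := by
  funext i
  rcases i with i | i
  · simpa [Matrix.mulVec, dotProduct, faceMatrix] using h1 i
  · simp only [Matrix.mulVec, dotProduct, faceMatrix, Matrix.map_apply, Matrix.of_apply,
      Pi.zero_apply]
    by_cases hxi : x i = 0
    · simp [hxi, ite_and]
      rw [Finset.sum_eq_single i]
      · simp [h2 i hxi]
      · intro b _ hb
        simp [if_neg (Ne.symm hb)]
      · simp
    · simp [hxi]

lemma faceMatrix_rat_kernel {m n : ℕ} (A : Matrix (Fin m) (Fin n) ℤ)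
    (x : Fin n → ℝ) (q : Fin n → ℚ) (h : (faceMatrix A x).mulVec q = 0) :
    (∀ i : Fin m, ∑ j : Fin n, (A i j : ℚ) * q j = 0) ∧
      (∀ j : Fin n, x j = 0 → q j = 0) := by
  constructor
  · intro i
    have := congrFun h (Sum.inl i)
    simpa [Matrix.mulVec, dotProduct, faceMatrix] using this
  · intro j hj
    have := congrFun h (Sum.inr j)
    simp only [Matrix.mulVec, dotProduct, faceMatrix, Matrix.of_apply,
      Pi.zero_apply] at this
    rw [Finset.sum_eq_single j] at this
    · simpa [hj] using this
    · intro b _ hb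
      simp only [ite_mul, one_mul, zero_mul, ite_eq_right_iff, and_imp]
      exact fun _ h => absurd h (Ne.symm hb)
    · simp

lemma vertex_of_line {m n : ℕ} (A : Matrix (Fin m) (Fin n) ℤ) (C : Finset (Fin n × Fin n))
    (x : Fin n → ℝ) (hx : IsSolution A C x) (hx0 : x ≠ 0)
    (hL : ∀ d : Fin n → ℝ, (∀ i, ∑ j, (A i j : ℝ) * d j = 0) →
      (∀ j, x j = 0 → d j = 0) → ∃ c : ℝ, d = c • x) :
    ∃ (lam : ℝ) (v : Fin n → ℝ), 0 ≤ lam ∧ IsVertexSolution A C v ∧ x = lam • v := by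
  have hker := faceMatrix_real_kernel A x x hx.1 (fun j hj => hj)
  obtain ⟨q₀, hq₀ne, hq₀ker⟩ := exists_rat_kernel _ x hx0 hker
  obtain ⟨hq₀A, hq₀supp⟩ := faceMatrix_rat_kernel A x q₀ hq₀ker
  obtain ⟨c₀, hc₀⟩ : ∃ c : ℝ, (fun j => (q₀ j : ℝ)) = c • x := by
    apply hL
    · intro i
      have h1 := hq₀A i
      have h2 : ((∑ j, (A i j : ℚ) * q₀ j : ℚ) : ℝ) = 0 := by rw [h1]; norm_num
      push_cast at h2
      exact h2
    · intro j hj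
      rw [hq₀supp j hj]; norm_num
  have hc₀ne : c₀ ≠ 0 := by
    rintro rfl
    apply hq₀ne
    funext j
    have h3 := congrFun hc₀ j
    simp only [Pi.smul_apply, zero_smul, smul_eq_mul, Pi.zero_apply, zero_mul] at h3 ⊢
    exact_mod_cast h3
  obtain ⟨q, c, hc, hqc⟩ : ∃ (q : Fin n → ℚ) (c : ℝ), 0 < c ∧ ∀ j, (q j : ℝ) = c * x j := by
    rcases hc₀ne.lt_or_gt with h | h
    · refine ⟨-q₀, -c₀, by linarith, fun j => ?_⟩
      have h3 := congrFun hc₀ j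
      simp only [Pi.smul_apply, smul_eq_mul] at h3
      simp only [Pi.neg_apply, Rat.cast_neg]
      rw [h3]; ring
    · refine ⟨q₀, c₀, h, fun j => ?_⟩
      have h3 := congrFun hc₀ j
      simpa using h3
  obtain ⟨j₀, hj₀⟩ : ∃ j, x j ≠ 0 := by
    by_contra h
    push_neg at h
    exact hx0 (funext h)
  have hxj₀ : 0 < x j₀ := (hx.2.1 j₀).lt_of_ne (Ne.symm hj₀)
  set D : ℕ := ∏ j, (q j).den with hD
  have hDpos : 0 < D := Finset.prod_pos (fun j _ => (q j).pos)
  set w : Fin n → ℤ := fun j => (q j).num * ((D / (q j).den : ℕ) : ℤ) with hw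
  have hwq : ∀ j, (w j : ℚ) = (D : ℚ) * q j := by
    intro j
    have hdvd : (q j).den ∣ D := Finset.dvd_prod_of_mem _ (Finset.mem_univ j)
    have key : ((D / (q j).den : ℕ) : ℚ) * ((q j).den : ℚ) = (D : ℚ) := by
      exact_mod_cast congrArg (Nat.cast : ℕ → ℚ) (Nat.div_mul_cancel hdvd)
    have hden : ((q j).den : ℚ) ≠ 0 := by
      exact_mod_cast (q j).pos.ne'
    have h2 : ((q j).num : ℚ) = q j * ((q j).den : ℚ) := by
      have h0 := Rat.num_div_den (q j)
      rw [div_eq_iff hden] at h0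
      exact h0
    rw [hw]
    rw [Int.cast_mul, Int.cast_natCast, h2]
    linear_combination (q j) * key
  have hwR : ∀ j, (w j : ℝ) = (D : ℝ) * c * x j := by
    intro j
    have h4 : ((w j : ℚ) : ℝ) = (((D : ℚ) * q j : ℚ) : ℝ) := by rw [hwq j]
    push_cast at h4
    rw [h4, hqc j]
    ring
  have hwpos : 0 < w j₀ := by
    have h5 : (0:ℝ) < (w j₀ : ℝ) := by
      rw [hwR j₀]
      have : (0:ℝ) < (D:ℝ) := by exact_mod_cast hDpos
      positivity
    exact_mod_cast h5
  have hwnonneg : ∀ j, 0 ≤ w j := by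
    intro j
    have h5 : (0:ℝ) ≤ (w j : ℝ) := by
      rw [hwR j]
      have h6 : (0:ℝ) ≤ (D:ℝ) := by positivity
      have := hx.2.1 j
      have := mul_nonneg (mul_nonneg h6 hc.le) this
      linarith
    exact_mod_cast h5
  set g : ℤ := Finset.univ.gcd w with hg
  have hgdvd : ∀ j, g ∣ w j := fun j => Finset.gcd_dvd (Finset.mem_univ j)
  have hgpos : 0 < g := by
    have hne : g ≠ 0 := by
      intro h0
      rw [hg, Finset.gcd_eq_zero_iff] at h0
      exact hwpos.ne' (h0 j₀ (Finset.mem_univ j₀))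
    have hnn : 0 ≤ g := by
      have hnorm : normalize g = g := Finset.normalize_gcd
      by_contra hneg
      push_neg at hneg
      rw [normalize_apply, Int.normUnit_eq, if_neg (not_le.mpr hneg)] at hnorm
      simp at hnorm
      omega
    exact hnn.lt_of_ne (Ne.symm hne)
  set u : Fin n → ℤ := fun j => w j / g with hu
  have huw : ∀ j, w j = g * u j := fun j => (Int.mul_ediv_cancel' (hgdvd j)).symm
  have hgcdu : Finset.univ.gcd u = 1 := by
    have h1 : Finset.univ.gcd w = g * Finset.univ.gcd u := by
      calc Finset.univ.gcd w = Finset.univ.gcd (fun j => g * u j) := by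
            apply Finset.gcd_congr rfl
            intro j _
            exact huw j
        _ = normalize g * Finset.univ.gcd u := Finset.gcd_mul_left
        _ = g * Finset.univ.gcd u := by rw [Int.normalize_of_nonneg hgpos.le]
    rw [← hg] at h1
    have h2 : g * 1 = g * Finset.univ.gcd u := by rw [mul_one]; exact h1
    exact (mul_left_cancel₀ hgpos.ne' h2).symm
  set c' : ℝ := ((D : ℝ) * c) / (g : ℝ) with hc'
  have hgR : (0:ℝ) < (g:ℝ) := by exact_mod_cast hgpos
  have hDR : (0:ℝ) < (D:ℝ) := by exact_mod_cast hDpos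
  have hc'pos : 0 < c' := by rw [hc']; positivity
  set V : Fin n → ℝ := fun j => (u j : ℝ) with hV
  have hVx : V = c' • x := by
    funext j
    have h7 : (w j : ℝ) = (g:ℝ) * (u j:ℝ) := by exact_mod_cast congrArg (Int.cast : ℤ → ℝ) (huw j)
    rw [hwR j] at h7
    simp only [hV, hc', Pi.smul_apply, smul_eq_mul]
    field_simp
    linarith [h7]
  have hVsol : IsSolution A C V := hVx ▸ hx.smul hc'pos.le
  have hVint : IsIntegralVec V := fun j => ⟨u j, rfl⟩
  have hVzero : ∀ j, x j = 0 → V j = 0 := by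
    intro j hj
    rw [hVx]
    simp [hj]
  refine ⟨1 / c', V, by positivity, ⟨hVsol, hVint, ?_, ?_⟩, ?_⟩
  · intro k hk y z hy hz hsum
    have hsupp : ∀ j, x j = 0 → y j = 0 ∧ z j = 0 := by
      intro j hj
      have hVj : V j = 0 := hVzero j hj
      have h8 := congrFun hsum j
      simp only [Pi.add_apply, Pi.smul_apply, smul_eq_mul, hVj, mul_zero] at h8
      constructor <;> nlinarith [hy.2.1 j, hz.2.1 j]
    obtain ⟨a, ha⟩ := hL y hy.1 (fun j hj => (hsupp j hj).1)
    obtain ⟨b, hb⟩ := hL z hz.1 (fun j hj => (hsupp j hj).2)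
    constructor
    · refine ⟨a / c', ?_⟩
      rw [ha, hVx]
      funext j
      simp only [Pi.smul_apply, smul_eq_mul]
      field_simp
    · refine ⟨b / c', ?_⟩
      rw [hb, hVx]
      funext j
      simp only [Pi.smul_apply, smul_eq_mul]
      field_simp
  · rintro ⟨k, y, hk2, hysol, hyint, hkey⟩
    have hdvd : ∀ j, (k:ℤ) ∣ u j := by
      intro j
      obtain ⟨zj, hzj⟩ := hyint j
      have h9 := congrFun hkey j
      simp only [Pi.smul_apply, smul_eq_mul, hV] at h9
      rw [hzj] at h9
      refine ⟨zj, ?_⟩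
      exact_mod_cast h9
    have hdvd1 : (k:ℤ) ∣ Finset.univ.gcd u := Finset.dvd_gcd (fun j _ => hdvd j)
    rw [hgcdu] at hdvd1
    have := Int.le_of_dvd one_pos hdvd1
    omega
  · rw [hVx]
    funext j
    simp only [Pi.smul_apply, smul_eq_mul]
    field_simp

lemma decompose {m n : ℕ} (A : Matrix (Fin m) (Fin n) ℤ) (C : Finset (Fin n × Fin n)) :
    ∀ s : ℕ, ∀ x : Fin n → ℝ, IsSolution A C x →
      (Finset.univ.filter fun j => x j ≠ 0).card ≤ s →
      ∃ (N : ℕ) (lam : Fin N → ℝ) (v : Fin N → (Fin n → ℝ)),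
        (∀ i, 0 ≤ lam i) ∧ (∀ i, IsVertexSolution A C (v i)) ∧ x = ∑ i, lam i • v i := by
  intro s
  induction s with
  | zero =>
    intro x hx hcard
    have hx0 : x = 0 := by
      funext j
      simp only [Pi.zero_apply]
      by_contra hj
      have h1 : j ∈ Finset.univ.filter fun j => x j ≠ 0 := by simp [hj]
      have := Finset.card_pos.mpr ⟨j, h1⟩
      omega
    exact ⟨0, fun _ => 0, fun _ => 0, fun i => le_refl 0, fun i => i.elim0, by simp [hx0]⟩
  | succ s IH =>
    intro x hx hcard
    by_cases hx0 : x = 0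
    · exact ⟨0, fun _ => 0, fun _ => 0, fun i => le_refl 0, fun i => i.elim0, by simp [hx0]⟩
    by_cases hL : ∀ d : Fin n → ℝ, (∀ i, ∑ j, (A i j : ℝ) * d j = 0) →
        (∀ j, x j = 0 → d j = 0) → ∃ c : ℝ, d = c • x
    · obtain ⟨lam, v, hlam, hv, hxv⟩ := vertex_of_line A C x hx hx0 hL
      exact ⟨1, fun _ => lam, fun _ => v, fun _ => hlam, fun _ => hv, by simpa using hxv⟩
    push_neg at hL
    obtain ⟨d, hdA, hdsupp, hdnot⟩ := hL
    set S := Finset.univ.filter (fun j => x j ≠ 0) with hS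
    have hSne : S.Nonempty := by
      rcases Function.ne_iff.mp hx0 with ⟨j, hj⟩
      refine ⟨j, ?_⟩
      simp only [hS, Finset.mem_filter, Finset.mem_univ, true_and]
      simpa using hj
    have hxpos : ∀ j ∈ S, 0 < x j := by
      intro j hj
      simp only [hS, Finset.mem_filter] at hj
      exact (hx.2.1 j).lt_of_ne (Ne.symm hj.2)
    obtain ⟨j₀, hj₀S, hj₀min⟩ := S.exists_min_image (fun j => d j / x j) hSne
    set r : ℝ := d j₀ / x j₀ with hr
    set w : Fin n → ℝ := fun j => d j - r * x j with hw
    have hwsupp : ∀ j, x j = 0 → w j = 0 := by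
      intro j hj
      simp [hw, hj, hdsupp j hj]
    have hwnn : ∀ j, 0 ≤ w j := by
      intro j
      by_cases hj : x j = 0
      · rw [hwsupp j hj]
      · have hjS : j ∈ S := by simp [hS, hj]
        have h1 := hj₀min j hjS
        have h2 := hxpos j hjS
        have h3 := (le_div_iff₀ h2).mp h1
        simp only [hw]
        linarith
    have hwj₀ : w j₀ = 0 := by
      have h2 := hxpos j₀ hj₀S
      simp only [hw, hr]
      field_simp
      ring
    have hwA : ∀ i, ∑ j, (A i j : ℝ) * w j = 0 := by
      intro i
      have h4 : ∀ j, (A i j : ℝ) * w j = (A i j : ℝ) * d j - r * ((A i j : ℝ) * x j) := by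
        intro j; simp only [hw]; ring
      rw [Finset.sum_congr rfl (fun j _ => h4 j), Finset.sum_sub_distrib, ← Finset.mul_sum,
        hdA i, hx.1 i]
      ring
    have hwsol : IsSolution A C w :=
      ⟨hwA, hwnn, fun p hp => (hx.2.2 p hp).imp (hwsupp p.1) (hwsupp p.2)⟩
    have hwne : w ≠ 0 := by
      intro h0
      apply hdnot r
      funext j
      have h5 := congrFun h0 j
      simp only [hw, Pi.zero_apply] at h5
      simp only [Pi.smul_apply, smul_eq_mul]
      linarith
    have hcard_w : (Finset.univ.filter fun j => w j ≠ 0).card ≤ s := by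
      have hsub : (Finset.univ.filter fun j => w j ≠ 0) ⊆ S := by
        intro j hj
        simp only [Finset.mem_filter, Finset.mem_univ, true_and] at hj
        simp only [hS, Finset.mem_filter, Finset.mem_univ, true_and]
        intro h
        exact hj (hwsupp j h)
      have hss : (Finset.univ.filter fun j => w j ≠ 0) ⊂ S := by
        rw [Finset.ssubset_iff_of_subset hsub]
        refine ⟨j₀, hj₀S, ?_⟩
        simp [hwj₀]
      have := Finset.card_lt_card hss
      omega
    set T := Finset.univ.filter (fun j => w j ≠ 0) with hT
    have hTne : T.Nonempty := by
      rcases Function.ne_iff.mp hwne with ⟨j, hj⟩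
      refine ⟨j, ?_⟩
      simp only [hT, Finset.mem_filter, Finset.mem_univ, true_and]
      simpa using hj
    have hwTpos : ∀ j ∈ T, 0 < w j := by
      intro j hj
      simp only [hT, Finset.mem_filter] at hj
      exact (hwnn j).lt_of_ne (Ne.symm hj.2)
    have hxTpos : ∀ j ∈ T, 0 < x j := by
      intro j hj
      simp only [hT, Finset.mem_filter] at hj
      have : x j ≠ 0 := fun h => hj.2 (hwsupp j h)
      exact (hx.2.1 j).lt_of_ne (Ne.symm this)
    obtain ⟨j₁, hj₁T, hj₁min⟩ := T.exists_min_image (fun j => x j / w j) hTne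
    set s₀ : ℝ := x j₁ / w j₁ with hs₀
    have hs₀pos : 0 < s₀ := div_pos (hxTpos j₁ hj₁T) (hwTpos j₁ hj₁T)
    set e : Fin n → ℝ := fun j => x j - s₀ * w j with he
    have hesupp : ∀ j, x j = 0 → e j = 0 := by
      intro j hj
      simp [he, hj, hwsupp j hj]
    have henn : ∀ j, 0 ≤ e j := by
      intro j
      by_cases hj : w j = 0
      · simp only [he, hj, mul_zero, sub_zero]
        exact hx.2.1 j
      · have hjT : j ∈ T := by simp [hT, hj]
        have h1 := hj₁min j hjT
        have h2 := hwTpos j hjT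
        have h3 := (le_div_iff₀ h2).mp h1
        simp only [he]
        linarith
    have hej₁ : e j₁ = 0 := by
      have h2 := hwTpos j₁ hj₁T
      simp only [he, hs₀]
      field_simp
      ring
    have heA : ∀ i, ∑ j, (A i j : ℝ) * e j = 0 := by
      intro i
      have h4 : ∀ j, (A i j : ℝ) * e j = (A i j : ℝ) * x j - s₀ * ((A i j : ℝ) * w j) := by
        intro j; simp only [he]; ring
      rw [Finset.sum_congr rfl (fun j _ => h4 j), Finset.sum_sub_distrib, ← Finset.mul_sum,
        hwA i, hx.1 i]
      ring
    have hesol : IsSolution A C e :=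
      ⟨heA, henn, fun p hp => (hx.2.2 p hp).imp (hesupp p.1) (hesupp p.2)⟩
    have hcard_e : (Finset.univ.filter fun j => e j ≠ 0).card ≤ s := by
      have hsub : (Finset.univ.filter fun j => e j ≠ 0) ⊆ S := by
        intro j hj
        simp only [Finset.mem_filter, Finset.mem_univ, true_and] at hj
        simp only [hS, Finset.mem_filter, Finset.mem_univ, true_and]
        intro h
        exact hj (hesupp j h)
      have hss : (Finset.univ.filter fun j => e j ≠ 0) ⊂ S := by
        rw [Finset.ssubset_iff_of_subset hsub]
        refine ⟨j₁, ?_, ?_⟩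
        · simp only [hS, Finset.mem_filter, Finset.mem_univ, true_and]
          exact (hxTpos j₁ hj₁T).ne'
        · simp [hej₁]
      have := Finset.card_lt_card hss
      omega
    obtain ⟨N1, lam1, v1, hlam1, hv1, hdec1⟩ := IH e hesol hcard_e
    obtain ⟨N2, lam2, v2, hlam2, hv2, hdec2⟩ := IH w hwsol hcard_w
    refine ⟨N1 + N2, Fin.append lam1 (fun i => s₀ * lam2 i), Fin.append v1 v2, ?_, ?_, ?_⟩
    · intro i
      induction i using Fin.addCases with
      | left i => simpa [Fin.append_left] using hlam1 i
      | right i =>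
        simp only [Fin.append_right]
        exact mul_nonneg hs₀pos.le (hlam2 i)
    · intro i
      induction i using Fin.addCases with
      | left i => simpa [Fin.append_left] using hv1 i
      | right i => simpa [Fin.append_right] using hv2 i
    · rw [Fin.sum_univ_add]
      simp only [Fin.append_left, Fin.append_right]
      have hxe : x = e + s₀ • w := by
        funext j
        simp only [he, Pi.add_apply, Pi.smul_apply, smul_eq_mul]
        ring
      rw [hxe, hdec1, hdec2]
      congr 1
      rw [Finset.smul_sum]
      congr 1
      funext i
      rw [smul_smul]

lemma reduce_count {n : ℕ} (Q : (Fin n → ℝ) → Prop) :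
    ∀ N : ℕ, ∀ (x : Fin n → ℝ) (lam : Fin N → ℝ) (v : Fin N → (Fin n → ℝ)),
      (∀ i, 0 ≤ lam i) → (∀ i, Q (v i)) → x = ∑ i, lam i • v i →
      ∃ m' : ℕ, m' ≤ n ∧ ∃ (lam' : Fin m' → ℝ) (v' : Fin m' → (Fin n → ℝ)),
        (∀ i, 0 ≤ lam' i) ∧ (∀ i, Q (v' i)) ∧ x = ∑ i, lam' i • v' i := by
  intro N
  induction N using Nat.strong_induction_on with
  | _ N IH =>
  intro x lam v h0 hQ hsum
  by_cases hN : N ≤ n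
  · exact ⟨N, hN, lam, v, h0, hQ, hsum⟩
  push_neg at hN
  obtain ⟨N', rfl⟩ : ∃ N', N = N' + 1 := ⟨N - 1, by omega⟩
  have hdep : ¬ LinearIndependent ℝ v := by
    intro h
    have h1 := h.fintype_card_le_finrank
    rw [Module.finrank_pi] at h1
    simp only [Fintype.card_fin] at h1
    omega
  obtain ⟨c₁, hc₁sum, i₀, hci₀⟩ := Fintype.not_linearIndependent_iff.mp hdep
  obtain ⟨c, hcsum, hcpos⟩ : ∃ c : Fin (N' + 1) → ℝ,
      ∑ i, c i • v i = 0 ∧ ∃ i, 0 < c i := by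
    by_cases h : ∃ i, 0 < c₁ i
    · exact ⟨c₁, hc₁sum, h⟩
    · push_neg at h
      refine ⟨-c₁, ?_, ⟨i₀, ?_⟩⟩
      · simp only [Pi.neg_apply, neg_smul, Finset.sum_neg_distrib, hc₁sum, neg_zero]
      · simp only [Pi.neg_apply]
        have : c₁ i₀ < 0 := (h i₀).lt_of_ne hci₀
        linarith
  set T := Finset.univ.filter (fun i => 0 < c i) with hT
  have hTne : T.Nonempty := by
    obtain ⟨i, hi⟩ := hcpos
    exact ⟨i, by simp [hT, hi]⟩
  obtain ⟨i₁, hi₁T, hi₁min⟩ := T.exists_min_image (fun i => lam i / c i) hTne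
  have hci₁ : 0 < c i₁ := by
    simp only [hT, Finset.mem_filter] at hi₁T
    exact hi₁T.2
  set t : ℝ := lam i₁ / c i₁ with ht
  have htnn : 0 ≤ t := div_nonneg (h0 i₁) hci₁.le
  set lam' : Fin (N' + 1) → ℝ := fun i => lam i - t * c i with hlam'
  have hlam'nn : ∀ i, 0 ≤ lam' i := by
    intro i
    by_cases hi : 0 < c i
    · have hiT : i ∈ T := by simp [hT, hi]
      have h1 := hi₁min i hiT
      have h3 := (le_div_iff₀ hi).mp h1
      simp only [hlam']
      linarith
    · push_neg at hi
      have : t * c i ≤ 0 := mul_nonpos_of_nonneg_of_nonpos htnn hi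
      have := h0 i
      simp only [hlam']
      linarith
  have hlam'i₁ : lam' i₁ = 0 := by
    simp only [hlam', ht]
    field_simp
    ring
  have hsum' : x = ∑ i, lam' i • v i := by
    rw [hsum]
    have : ∀ i : Fin (N' + 1), lam' i • v i = lam i • v i - t • (c i • v i) := by
      intro i
      simp only [hlam', sub_smul, smul_smul]
    rw [Finset.sum_congr rfl (fun i _ => this i), Finset.sum_sub_distrib, ← Finset.smul_sum,
      hcsum, smul_zero, sub_zero]
  have hsum'' : x = ∑ i : Fin N', (lam' (i₁.succAbove i)) • v (i₁.succAbove i) := by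
    rw [hsum', Fin.sum_univ_succAbove _ i₁, hlam'i₁, zero_smul, zero_add]
  exact IH N' (by omega) x (fun i => lam' (i₁.succAbove i)) (fun i => v (i₁.succAbove i))
    (fun i => hlam'nn _) (fun i => hQ _) hsum''

/-- Every solution to Σ is a nonnegative linear combination of at most `n` vertex
solutions. -/
theorem solution_eq_nonneg_combination_of_vertex_solutions
    {m n : ℕ} (hm : 0 < m) (hn : 0 < n)
    (A : Matrix (Fin m) (Fin n) ℤ) (C : Finset (Fin n × Fin n))
    (x : Fin n → ℝ) (hx : IsSolution A C x) :
    ∃ m' : ℕ, m' ≤ n ∧ ∃ (lam : Fin m' → ℝ) (v : Fin m' → (Fin n → ℝ)),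
      (∀ i : Fin m', 0 ≤ lam i) ∧ (∀ i : Fin m', IsVertexSolution A C (v i)) ∧
        x = ∑ i : Fin m', lam i • v i := by
  have hcard : (Finset.univ.filter fun j => x j ≠ 0).card ≤ n := by
    have := Finset.card_filter_le (Finset.univ : Finset (Fin n)) (fun j => x j ≠ 0)
    simpa using this
  obtain ⟨N, lam, v, hlam, hv, hsum⟩ := decompose A C n x hx hcard
  exact reduce_count (IsVertexSolution A C) N x lam v hlam hv hsum
end
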